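/- For β ∈ ℝ, θ ∈ (0,1), with b₂ = e^β/(e^βθ+1−θ), λ₀ = 1 + [νθ(1−θ)/(1+ν)](1−e^β)²/((1−θ+e^βθ)²+νe^β) and g(ρ)² = (1 − 2(b₁−b₂)ρ + O(ρ²)) where b₁ = e^β(1−θ)+θ, the product satisfies g(ρ)²·λ(ρ) = λ₀ + O(ρ) as ρ → 0⁺, whenever λ(ρ) = λ₀ + O(ρ). In particular, the rare-outcome Pitman efficiency e_P(T_M,T_A) = λ₀ + O(ρ) is at least 1 − O(ρ), and strictly exceeds 1 in the limit when β ≠ 0. -/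

import Mathlib

open Filter Asymptotics

theorem pitman_rare_outcome (ν θ β : ℝ) (hν : 0 < ν) (hθ : θ ∈ Set.Ioo (0:ℝ) 1)
    (lam : ℝ → ℝ) :
    let b₁ := Real.exp β * (1 - θ) + θ
    let b₂ := Real.exp β / (Real.exp β * θ + 1 - θ)
    let g : ℝ → ℝ := fun ρ => (b₁ * b₂ * ρ ^ 2 + 2 * b₂ * ρ + 1) /
        (b₁ * b₂ * ρ ^ 2 + (b₁ + b₂) * ρ + 1)
    let lam0 := 1 + (ν * θ * (1 - θ) / (1 + ν)) *
        ((1 - Real.exp β) ^ 2 / ((1 - θ + Real.exp β * θ) ^ 2 + ν * Real.exp β))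
    (fun ρ : ℝ => lam ρ - lam0) =O[nhdsWithin 0 (Set.Ioi 0)] (fun ρ : ℝ => ρ) →
      ((fun ρ : ℝ => (g ρ) ^ 2 * lam ρ - lam0) =O[nhdsWithin 0 (Set.Ioi 0)]
          (fun ρ : ℝ => ρ) ∧
        lam0 ≥ 1 ∧ (β ≠ 0 → lam0 > 1)) := by
  intro b₁ b₂ g lam0 hlam
  obtain ⟨hθ0, hθ1⟩ := hθ
  have hE := Real.exp_pos β
  have hgdef : g = fun ρ => (b₁ * b₂ * ρ ^ 2 + 2 * b₂ * ρ + 1) /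
      (b₁ * b₂ * ρ ^ 2 + (b₁ + b₂) * ρ + 1) := rfl
  have hlam0 : lam0 = 1 + (ν * θ * (1 - θ) / (1 + ν)) *
      ((1 - Real.exp β) ^ 2 / ((1 - θ + Real.exp β * θ) ^ 2 + ν * Real.exp β)) := rfl
  -- tendsto facts
  have hcont : ∀ a c : ℝ, Continuous fun ρ : ℝ => b₁ * b₂ * ρ ^ 2 + (a + c) * ρ + 1 := by
    intro a c; continuity
  have hDt : Filter.Tendsto (fun ρ : ℝ => b₁ * b₂ * ρ ^ 2 + (b₁ + b₂) * ρ + 1)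
      (nhdsWithin 0 (Set.Ioi 0)) (nhds 1) := by
    have h : Filter.Tendsto (fun ρ : ℝ => b₁ * b₂ * ρ ^ 2 + (b₁ + b₂) * ρ + 1)
        (nhds 0) (nhds 1) := by
      have h0 := (hcont b₁ b₂).tendsto 0
      simpa using h0
    exact h.mono_left nhdsWithin_le_nhds
  have hNt : Filter.Tendsto (fun ρ : ℝ => b₁ * b₂ * ρ ^ 2 + 2 * b₂ * ρ + 1)
      (nhdsWithin 0 (Set.Ioi 0)) (nhds 1) := by
    have h : Filter.Tendsto (fun ρ : ℝ => b₁ * b₂ * ρ ^ 2 + (b₂ + b₂) * ρ + 1)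
        (nhds 0) (nhds 1) := by
      have h0 := (hcont b₂ b₂).tendsto 0
      simpa using h0
    exact ((h.mono_left nhdsWithin_le_nhds).congr fun ρ => by ring)
  have hgt : Filter.Tendsto g (nhdsWithin 0 (Set.Ioi 0)) (nhds 1) := by
    have h := hNt.div hDt one_ne_zero
    rw [hgdef]
    rw [div_one] at h
    exact h
  have hD_ev : ∀ᶠ ρ in nhdsWithin 0 (Set.Ioi 0),
      (1:ℝ)/2 < b₁ * b₂ * ρ ^ 2 + (b₁ + b₂) * ρ + 1 :=
    hDt.eventually (eventually_gt_nhds (by norm_num))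
  have hg1 : (fun ρ => g ρ - 1) =O[nhdsWithin 0 (Set.Ioi 0)] (fun ρ : ℝ => ρ) := by
    refine IsBigO.of_bound (2 * |b₂ - b₁|) ?_
    filter_upwards [hD_ev] with ρ hρ
    have hDpos : 0 < b₁ * b₂ * ρ ^ 2 + (b₁ + b₂) * ρ + 1 :=
      lt_trans (by norm_num) hρ
    have heq : g ρ - 1 = (b₂ - b₁) * ρ / (b₁ * b₂ * ρ ^ 2 + (b₁ + b₂) * ρ + 1) := by
      rw [hgdef]
      beta_reduce
      rw [div_sub_one hDpos.ne']
      ring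
    rw [Real.norm_eq_abs, Real.norm_eq_abs, heq, abs_div, abs_mul, abs_of_pos hDpos]
    have hA : 0 ≤ |b₂ - b₁| * |ρ| := mul_nonneg (abs_nonneg _) (abs_nonneg _)
    calc |b₂ - b₁| * |ρ| / (b₁ * b₂ * ρ ^ 2 + (b₁ + b₂) * ρ + 1)
        ≤ |b₂ - b₁| * |ρ| / (1 / 2) :=
          div_le_div_of_nonneg_left hA (by norm_num) hρ.le
      _ = 2 * |b₂ - b₁| * |ρ| := by ring
  have hgO : g =O[nhdsWithin 0 (Set.Ioi 0)] (fun _ : ℝ => (1:ℝ)) :=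
    hgt.isBigO_one ℝ
  have hgp1O : (fun ρ => g ρ + 1) =O[nhdsWithin 0 (Set.Ioi 0)] (fun _ : ℝ => (1:ℝ)) := by
    have h2 : Filter.Tendsto (fun ρ => g ρ + 1) (nhdsWithin 0 (Set.Ioi 0))
        (nhds (1 + 1)) := hgt.add tendsto_const_nhds
    exact h2.isBigO_one ℝ
  have h1 : (fun ρ => g ρ ^ 2 * (lam ρ - lam0)) =O[nhdsWithin 0 (Set.Ioi 0)]
      (fun ρ : ℝ => ρ) := by
    have h := (hgO.mul hgO).mul hlam
    simpa [pow_two] using h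
  have h2 : (fun ρ => lam0 * ((g ρ + 1) * (g ρ - 1))) =O[nhdsWithin 0 (Set.Ioi 0)]
      (fun ρ : ℝ => ρ) := by
    have h := (hgp1O.mul hg1).const_mul_left lam0
    simpa using h
  refine ⟨?_, ?_, ?_⟩
  · refine (h1.add h2).congr (fun ρ => by ring) (fun ρ => rfl)
  · have hc : 0 < ν * θ * (1 - θ) / (1 + ν) := by
      apply div_pos
      · apply mul_pos (mul_pos hν hθ0); linarith
      · linarith
    have hden : 0 < (1 - θ + Real.exp β * θ) ^ 2 + ν * Real.exp β :=
      add_pos_of_nonneg_of_pos (sq_nonneg _) (mul_pos hν hE)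
    have hd : 0 ≤ (1 - Real.exp β) ^ 2 / ((1 - θ + Real.exp β * θ) ^ 2 + ν * Real.exp β) :=
      div_nonneg (sq_nonneg _) hden.le
    rw [hlam0]
    nlinarith [mul_nonneg hc.le hd]
  · intro hβ
    have hc : 0 < ν * θ * (1 - θ) / (1 + ν) := by
      apply div_pos
      · apply mul_pos (mul_pos hν hθ0); linarith
      · linarith
    have hden : 0 < (1 - θ + Real.exp β * θ) ^ 2 + ν * Real.exp β :=
      add_pos_of_nonneg_of_pos (sq_nonneg _) (mul_pos hν hE)
    have hne : (1 - Real.exp β) ≠ 0 := by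
      intro h
      have h1 : Real.exp β = Real.exp 0 := by rw [Real.exp_zero]; linarith
      exact hβ (Real.exp_eq_exp.mp h1)
    have hsq : 0 < (1 - Real.exp β) ^ 2 :=
      lt_of_le_of_ne (sq_nonneg _) (Ne.symm (pow_ne_zero 2 hne))
    have hd : 0 < (1 - Real.exp β) ^ 2 / ((1 - θ + Real.exp β * θ) ^ 2 + ν * Real.exp β) :=
      div_pos hsq hden
    rw [hlam0]
    nlinarith [mul_pos hc hd]
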